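/- For x ∈ A[G], the image of x in the quotient ring R = A[G]/J is a unit if and only if det x ∈ A^× (i.e. det(ρ(x)) is a unit of A). -/

import Mathlib

open TensorProduct

/-- The two-sided ideal `J ⊆ A[G]` generated by the elements
`g² − (tr ρ(g))·g + (det ρ(g))·1`, for `g ∈ G`. -/
noncomputable def blrIdeal {A : Type} [CommRing A]
    {V : Type} [AddCommGroup V] [Module A V] [Module.Free A V] [Module.Finite A V]
    {G : Type} [Group G] (ρ : Representation A G V) :
    TwoSidedIdeal (MonoidAlgebra A G) :=
  TwoSidedIdeal.span
    {x : MonoidAlgebra A G | ∃ g : G,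
      x = MonoidAlgebra.of A G g * MonoidAlgebra.of A G g
        - LinearMap.trace A V (ρ g) • MonoidAlgebra.of A G g
        + LinearMap.det (ρ g) • (1 : MonoidAlgebra A G)}

section Aux

variable {A : Type} [CommRing A]
    {V : Type} [AddCommGroup V] [Module A V] [Module.Free A V] [Module.Finite A V]

lemma matCH (M : Matrix (Fin 2) (Fin 2) A) :
    M * M - M.trace • M + M.det • 1 = 0 := by
  ext i j
  fin_cases i <;> fin_cases j <;>
    simp [Matrix.mul_apply, Matrix.trace_fin_two, Matrix.det_fin_two, Fin.sum_univ_two,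
      Matrix.one_apply] <;> ring

lemma matDetAdd (M N : Matrix (Fin 2) (Fin 2) A) :
    (M + N).det = M.det + N.det + M.trace * N.trace - (M * N).trace := by
  simp [Matrix.det_fin_two, Matrix.trace_fin_two, Matrix.mul_apply, Fin.sum_univ_two]; ring

variable [Nontrivial A]

lemma endCH (hrank : Module.finrank A V = 2) (f : Module.End A V) :
    f * f - (LinearMap.trace A V f) • f + (LinearMap.det f) • 1 = 0 := by
  let b := Module.finBasisOfFinrankEq A V hrank
  apply (LinearMap.toMatrix b b).injective
  rw [map_add, map_sub, map_smul, map_smul, map_zero, LinearMap.toMatrix_mul,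
    LinearMap.toMatrix_one, LinearMap.trace_eq_matrix_trace A b, ← LinearMap.det_toMatrix b]
  exact matCH _

lemma endDetAdd (hrank : Module.finrank A V = 2) (f g : Module.End A V) :
    LinearMap.det (f + g) = LinearMap.det f + LinearMap.det g
      + LinearMap.trace A V f * LinearMap.trace A V g - LinearMap.trace A V (f * g) := by
  let b := Module.finBasisOfFinrankEq A V hrank
  rw [← LinearMap.det_toMatrix b, ← LinearMap.det_toMatrix b f, ← LinearMap.det_toMatrix b g,
    LinearMap.trace_eq_matrix_trace A b, LinearMap.trace_eq_matrix_trace A b,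
    LinearMap.trace_eq_matrix_trace A b, map_add, LinearMap.toMatrix_mul]
  exact matDetAdd _ _

lemma endDetSmul (hrank : Module.finrank A V = 2) (a : A) (f : Module.End A V) :
    LinearMap.det (a • f) = a ^ 2 * LinearMap.det f := by
  let b := Module.finBasisOfFinrankEq A V hrank
  rw [← LinearMap.det_toMatrix b, ← LinearMap.det_toMatrix b f, map_smul, Matrix.det_smul]
  norm_num

end Aux

section GA

variable {A : Type} [CommRing A]
    {V : Type} [AddCommGroup V] [Module A V] [Module.Free A V] [Module.Finite A V]
    {G : Type} [Group G] (ρ : Representation A G V)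

local notation "og" => MonoidAlgebra.of A G

set_option linter.unusedSectionVars false

noncomputable def blrT (x : MonoidAlgebra A G) : A := LinearMap.trace A V (ρ.asAlgebraHom x)
noncomputable def blrD (x : MonoidAlgebra A G) : A := LinearMap.det (ρ.asAlgebraHom x)
noncomputable def blrCH (x : MonoidAlgebra A G) : MonoidAlgebra A G :=
  x * x - blrT ρ x • x + blrD ρ x • 1
noncomputable def blrB (x y : MonoidAlgebra A G) : MonoidAlgebra A G :=
  x * y + y * x - blrT ρ x • y - blrT ρ y • x + (blrT ρ x * blrT ρ y - blrT ρ (x * y)) • 1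

lemma blrT_of (g : G) : blrT ρ (og g) = LinearMap.trace A V (ρ g) := by
  rw [blrT, Representation.asAlgebraHom_of]

lemma blrD_of (g : G) : blrD ρ (og g) = LinearMap.det (ρ g) := by
  rw [blrD, Representation.asAlgebraHom_of]

lemma blrT_add (x y : MonoidAlgebra A G) : blrT ρ (x + y) = blrT ρ x + blrT ρ y := by
  simp [blrT, map_add]

lemma blrT_smul (a : A) (x : MonoidAlgebra A G) : blrT ρ (a • x) = a * blrT ρ x := by
  simp [blrT, map_smul]

lemma blrD_mul (x y : MonoidAlgebra A G) : blrD ρ (x * y) = blrD ρ x * blrD ρ y := by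
  rw [blrD, blrD, blrD, map_mul]
  exact LinearMap.det_comp _ _

lemma blrJ_smul (a : A) {z : MonoidAlgebra A G} (hz : z ∈ blrIdeal ρ) :
    a • z ∈ blrIdeal ρ := by
  rw [Algebra.smul_def]
  exact (blrIdeal ρ).mul_mem_left _ _ hz

lemma blrCH_of_mem (g : G) : blrCH ρ (og g) ∈ blrIdeal ρ := by
  rw [blrCH, blrT_of, blrD_of]
  exact TwoSidedIdeal.subset_span ⟨g, rfl⟩


lemma blrBident (g h : G) (tg th tgh dg dh : A) :
    og g * og h + og h * og g - tg • og h - th • og g + (tg * th - tgh) • (1 : MonoidAlgebra A G)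
      = og g⁻¹ * ((og (g * h) * og (g * h) - tgh • og (g * h) + (dg * dh) • 1) * og h⁻¹)
        - dg • (og g⁻¹ * ((og h * og h - th • og h + dh • 1) * og h⁻¹))
        - th • ((og g * og g - tg • og g + dg • 1) * og g⁻¹)
        + ((og g * og g - tg • og g + dg • 1) * og g⁻¹) * og h := by
  simp only [sub_mul, add_mul, mul_sub, mul_add, smul_mul_assoc, mul_smul_comm, mul_one, one_mul,
    ← map_mul, mul_assoc, mul_inv_cancel, inv_mul_cancel, mul_inv_cancel_left,
    inv_mul_cancel_left, mul_inv_cancel_right, inv_mul_cancel_right, map_one, smul_smul]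
  module

lemma blrB_of_mem (g h : G) : blrB ρ (og g) (og h) ∈ blrIdeal ρ := by
  have key : blrB ρ (og g) (og h)
      = og g⁻¹ * ((og (g * h) * og (g * h)
            - LinearMap.trace A V (ρ (g * h)) • og (g * h)
            + LinearMap.det (ρ (g * h)) • 1) * og h⁻¹)
        - blrD ρ (og g) • (og g⁻¹ * ((og h * og h - LinearMap.trace A V (ρ h) • og h
            + LinearMap.det (ρ h) • 1) * og h⁻¹))
        - blrT ρ (og h) • ((og g * og g - LinearMap.trace A V (ρ g) • og g
            + LinearMap.det (ρ g) • 1) * og g⁻¹)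
        + ((og g * og g - LinearMap.trace A V (ρ g) • og g
            + LinearMap.det (ρ g) • 1) * og g⁻¹) * og h := by
    have hD : LinearMap.det (ρ (g * h)) = LinearMap.det (ρ g) * LinearMap.det (ρ h) := by
      rw [map_mul]; exact LinearMap.det_comp _ _
    have hT : blrT ρ (og g * og h) = LinearMap.trace A V (ρ (g * h)) := by
      rw [← map_mul, blrT_of]
    rw [blrB, blrT_of, blrT_of, hT, hD, blrD_of]
    exact blrBident g h _ _ _ _ _
  rw [key]
  have m1 : _ ∈ blrIdeal ρ := TwoSidedIdeal.subset_span
    (show _ ∈ {x : MonoidAlgebra A G | ∃ g : G, x = _} from ⟨g * h, rfl⟩)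
  have m2 : _ ∈ blrIdeal ρ := TwoSidedIdeal.subset_span
    (show _ ∈ {x : MonoidAlgebra A G | ∃ g : G, x = _} from ⟨h, rfl⟩)
  have m3 : _ ∈ blrIdeal ρ := TwoSidedIdeal.subset_span
    (show _ ∈ {x : MonoidAlgebra A G | ∃ g : G, x = _} from ⟨g, rfl⟩)
  refine (blrIdeal ρ).add_mem ((blrIdeal ρ).sub_mem ((blrIdeal ρ).sub_mem ?_ ?_) ?_) ?_
  · exact (blrIdeal ρ).mul_mem_left _ _ ((blrIdeal ρ).mul_mem_right _ _ m1)
  · exact blrJ_smul ρ _ ((blrIdeal ρ).mul_mem_left _ _ ((blrIdeal ρ).mul_mem_right _ _ m2))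
  · exact blrJ_smul ρ _ ((blrIdeal ρ).mul_mem_right _ _ m3)
  · exact (blrIdeal ρ).mul_mem_right _ _ ((blrIdeal ρ).mul_mem_right _ _ m3)

lemma blrB_comm (x y : MonoidAlgebra A G) : blrB ρ x y = blrB ρ y x := by
  have : blrT ρ (x * y) = blrT ρ (y * x) := by
    rw [blrT, blrT, _root_.map_mul ρ.asAlgebraHom, _root_.map_mul ρ.asAlgebraHom]
    exact LinearMap.trace_mul_comm A _ _
  rw [blrB, blrB, this]
  module

lemma blrB_add_right (x y z : MonoidAlgebra A G) :
    blrB ρ x (y + z) = blrB ρ x y + blrB ρ x z := by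
  simp only [blrB, mul_add, add_mul, blrT_add, mul_add]
  module

lemma blrB_smul_right (a : A) (x y : MonoidAlgebra A G) :
    blrB ρ x (a • y) = a • blrB ρ x y := by
  simp only [blrB, mul_smul_comm, smul_mul_assoc, blrT_smul]
  module

lemma blrB_mem (x y : MonoidAlgebra A G) : blrB ρ x y ∈ blrIdeal ρ := by
  induction x using MonoidAlgebra.induction_on with
  | of g =>
    induction y using MonoidAlgebra.induction_on with
    | of h => exact blrB_of_mem ρ g h
    | add u v hu hv => rw [blrB_add_right]; exact (blrIdeal ρ).add_mem hu hv
    | smul a u hu => rw [blrB_smul_right]; exact blrJ_smul ρ _ hu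
  | add u v hu hv =>
    rw [blrB_comm, blrB_add_right, blrB_comm ρ y u, blrB_comm ρ y v]
    exact (blrIdeal ρ).add_mem hu hv
  | smul a u hu =>
    rw [blrB_comm, blrB_smul_right, blrB_comm ρ y u]
    exact blrJ_smul ρ _ hu

variable [Nontrivial A]

lemma blrCH_add (hrank : Module.finrank A V = 2) (x y : MonoidAlgebra A G) :
    blrCH ρ (x + y) = blrCH ρ x + blrCH ρ y + blrB ρ x y := by
  have hD : blrD ρ (x + y) = blrD ρ x + blrD ρ y + blrT ρ x * blrT ρ y - blrT ρ (x * y) := by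
    rw [blrD, blrD, blrD, blrT, blrT, blrT, map_add, _root_.map_mul ρ.asAlgebraHom]
    exact endDetAdd hrank _ _
  rw [blrCH, blrCH, blrCH, blrB, hD, blrT_add]
  simp only [mul_add, add_mul]
  module

lemma blrCH_smul (hrank : Module.finrank A V = 2) (a : A) (x : MonoidAlgebra A G) :
    blrCH ρ (a • x) = (a * a) • blrCH ρ x := by
  have hD : blrD ρ (a • x) = a ^ 2 * blrD ρ x := by
    rw [blrD, blrD, map_smul]
    exact endDetSmul hrank _ _
  rw [blrCH, blrCH, hD, blrT_smul]
  simp only [smul_mul_assoc, mul_smul_comm, pow_two]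
  module

lemma blrCH_mem (hrank : Module.finrank A V = 2) (x : MonoidAlgebra A G) :
    blrCH ρ x ∈ blrIdeal ρ := by
  induction x using MonoidAlgebra.induction_on with
  | of g => exact blrCH_of_mem ρ g
  | add u v hu hv =>
    rw [blrCH_add ρ hrank]
    exact (blrIdeal ρ).add_mem ((blrIdeal ρ).add_mem hu hv) (blrB_mem ρ u v)
  | smul a u hu =>
    rw [blrCH_smul ρ hrank]
    exact blrJ_smul ρ _ hu

lemma blrIdeal_le_ker (hrank : Module.finrank A V = 2) {z : MonoidAlgebra A G}
    (hz : z ∈ blrIdeal ρ) : ρ.asAlgebraHom z = 0 := by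
  have : z ∈ TwoSidedIdeal.ker ρ.asAlgebraHom := by
    refine TwoSidedIdeal.mem_span_iff.mp hz _ ?_
    rintro _ ⟨g, rfl⟩
    rw [SetLike.mem_coe, TwoSidedIdeal.mem_ker]
    simp only [map_add, map_sub, map_mul, map_smul, map_one, Representation.asAlgebraHom_of]
    exact endCH hrank (ρ g)
  rwa [TwoSidedIdeal.mem_ker] at this

end GA

/-- for `x ∈ A[G]`, the image of `x` in the quotient ring `R = A[G]/J`
is a unit (i.e. `x` is invertible modulo `J`) if and only if `det(ρ(x)) ∈ A^×`. -/
theorem isUnit_mod_ideal_iff_det_isUnit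
    {A : Type} [CommRing A] [IsLocalRing A] [IsNoetherianRing A]
    [IsAdicComplete (IsLocalRing.maximalIdeal A) A]
    {V : Type} [AddCommGroup V] [Module A V] [Module.Free A V] [Module.Finite A V]
    (hrank : Module.finrank A V = 2)
    {G : Type} [Group G] (ρ : Representation A G V)
    (hirr : ∀ (K : Type) [Field K] [Algebra A K],
      (∀ a ∈ IsLocalRing.maximalIdeal A, algebraMap A K a = 0) →
      ∀ W : Submodule K (K ⊗[A] V),
        (∀ (g : G), ∀ x ∈ W, LinearMap.baseChange K (ρ g) x ∈ W) → W = ⊥ ∨ W = ⊤)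
    (x : MonoidAlgebra A G) :
    (∃ y : MonoidAlgebra A G, x * y - 1 ∈ blrIdeal ρ ∧ y * x - 1 ∈ blrIdeal ρ)
      ↔ IsUnit (LinearMap.det (ρ.asAlgebraHom x)) := by
  constructor
  · rintro ⟨y, h1, h2⟩
    have e1 : ρ.asAlgebraHom x * ρ.asAlgebraHom y = 1 := by
      have := blrIdeal_le_ker ρ hrank h1
      rwa [map_sub, _root_.map_mul, map_one, sub_eq_zero] at this
    have e2 : ρ.asAlgebraHom y * ρ.asAlgebraHom x = 1 := by
      have := blrIdeal_le_ker ρ hrank h2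
      rwa [map_sub, _root_.map_mul, map_one, sub_eq_zero] at this
    have hu : IsUnit (ρ.asAlgebraHom x) := ⟨⟨_, _, e1, e2⟩, rfl⟩
    exact hu.map LinearMap.det
  · intro hd
    obtain ⟨u, hu⟩ := hd
    have hc : (↑u⁻¹ : A) * blrD ρ x = 1 := by
      rw [blrD, ← hu]; exact Units.inv_mul u
    refine ⟨(↑u⁻¹ : A) • (blrT ρ x • 1 - x), ?_, ?_⟩
    · have key : x * ((↑u⁻¹ : A) • (blrT ρ x • 1 - x)) - 1
          = (-(↑u⁻¹ : A)) • blrCH ρ x + ((↑u⁻¹ : A) * blrD ρ x - 1) • 1 := by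
        rw [blrCH]
        simp only [mul_sub, mul_smul_comm, mul_one, smul_sub]
        module
      rw [key, hc, sub_self, zero_smul, add_zero]
      exact blrJ_smul ρ _ (blrCH_mem ρ hrank x)
    · have key : ((↑u⁻¹ : A) • (blrT ρ x • 1 - x)) * x - 1
          = (-(↑u⁻¹ : A)) • blrCH ρ x + ((↑u⁻¹ : A) * blrD ρ x - 1) • 1 := by
        rw [blrCH]
        simp only [sub_mul, smul_mul_assoc, one_mul, smul_sub]
        module
      rw [key, hc, sub_self, zero_smul, add_zero]
      exact blrJ_smul ρ _ (blrCH_mem ρ hrank x)
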